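/- Let z₀ > 0 and k ∈ ℝ. Then there exists a unique quadruple (C₁, C₂, C₃, C₄) ∈ ℝ⁴ such that the function F(z) = 1 + (1/2)C₁e^{−2z} + C₂e^{−z} + C₃e^{z} + (1/2)C₄e^{2z} satisfies F(−z₀) = 0, F(z₀) = 0, F'(−z₀) = k, and F'(z₀) = −k. Moreover, for this unique quadruple one has F(z) = 1 + a·cosh(2z) + 2b·cosh(z) for all z, where a = (sinh z₀ − k·cosh z₀)/((2 + cosh 2z₀)·sinh z₀) and b = (k·cosh 2z₀ − 2·sinh 2z₀)/(2(2 + cosh 2z₀)·sinh z₀). -/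

import Mathlib

open Real

/-- The general solution `F(z) = 1 + (1/2)C₁e^{−2z} + C₂e^{−z} + C₃eᶻ + (1/2)C₄e^{2z}`
of the extremal Kähler equation. -/
noncomputable def Fext (C₁ C₂ C₃ C₄ : ℝ) (z : ℝ) : ℝ :=
  1 + (1/2) * C₁ * exp (-2*z) + C₂ * exp (-z) + C₃ * exp z + (1/2) * C₄ * exp (2*z)

lemma Fext_hasDerivAt (C₁ C₂ C₃ C₄ z : ℝ) :
    HasDerivAt (Fext C₁ C₂ C₃ C₄)
      (-C₁ * exp (-2*z) - C₂ * exp (-z) + C₃ * exp z + C₄ * exp (2*z)) z := by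
  have h1 : HasDerivAt (fun x : ℝ => exp (-2*x)) (exp (-2*z) * (-2)) z := by
    simpa using (HasDerivAt.exp ((hasDerivAt_id z).const_mul (-2)))
  have h2 : HasDerivAt (fun x : ℝ => exp (-x)) (exp (-z) * (-1)) z := by
    simpa using (HasDerivAt.exp ((hasDerivAt_id z).const_mul (-1)))
  have h3 : HasDerivAt (fun x : ℝ => exp x) (exp z) z := Real.hasDerivAt_exp z
  have h4 : HasDerivAt (fun x : ℝ => exp (2*x)) (exp (2*z) * 2) z := by
    simpa using (HasDerivAt.exp ((hasDerivAt_id z).const_mul 2))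
  have := ((((h1.const_mul ((1:ℝ)/2 * C₁)).const_add 1).add (h2.const_mul C₂)).add
      (h3.const_mul C₃)).add (h4.const_mul ((1:ℝ)/2 * C₄))
  exact this.congr_deriv (by ring)

lemma deriv_Fext (C₁ C₂ C₃ C₄ z : ℝ) :
    deriv (Fext C₁ C₂ C₃ C₄) z =
      -C₁ * exp (-2*z) - C₂ * exp (-z) + C₃ * exp z + C₄ * exp (2*z) :=
  (Fext_hasDerivAt C₁ C₂ C₃ C₄ z).deriv

/-- The explicit value of `C₁ = C₄` in terms of `e = exp z₀`. -/
noncomputable def Aval (z₀ k : ℝ) : ℝ :=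
  2*(exp z₀)^2*(((exp z₀)^2-1) - k*((exp z₀)^2+1)) /
    (((exp z₀)^2-1)*((exp z₀)^4+4*(exp z₀)^2+1))

/-- The explicit value of `C₂ = C₃` in terms of `e = exp z₀`. -/
noncomputable def Bval (z₀ k : ℝ) : ℝ :=
  (exp z₀)*(k*((exp z₀)^4+1) - 2*((exp z₀)^4-1)) /
    (((exp z₀)^2-1)*((exp z₀)^4+4*(exp z₀)^2+1))

lemma key (z₀ k C₁ C₂ C₃ C₄ : ℝ) (hz₀ : 0 < z₀)
    (h1 : Fext C₁ C₂ C₃ C₄ (-z₀) = 0) (h2 : Fext C₁ C₂ C₃ C₄ z₀ = 0)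
    (h3 : deriv (Fext C₁ C₂ C₃ C₄) (-z₀) = k)
    (h4 : deriv (Fext C₁ C₂ C₃ C₄) z₀ = -k) :
    C₁ = Aval z₀ k ∧ C₂ = Bval z₀ k ∧ C₃ = Bval z₀ k ∧ C₄ = Aval z₀ k := by
  rw [deriv_Fext] at h3 h4
  simp only [Fext] at h1 h2
  set e := exp z₀ with he_def
  have he0 : (0:ℝ) < e := exp_pos z₀
  have he1 : (1:ℝ) < e := by
    rw [he_def]; simpa using Real.exp_lt_exp.mpr hz₀
  have hene : e^2 - 1 ≠ 0 := by nlinarith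
  have hd : e^4+4*e^2+1 ≠ 0 := by positivity
  have E1 : exp (-2 * -z₀) = e^2 := by
    rw [show (-2:ℝ) * -z₀ = z₀ + z₀ by ring, Real.exp_add, ← sq]
  have E2 : exp (-(-z₀)) = e := by rw [neg_neg]
  have E3 : exp (-z₀) = e⁻¹ := Real.exp_neg z₀
  have E4 : exp (2 * -z₀) = (e^2)⁻¹ := by
    rw [show (2:ℝ) * -z₀ = -(z₀ + z₀) by ring, Real.exp_neg, Real.exp_add, ← sq]
  have E5 : exp (2 * z₀) = e^2 := by rw [two_mul, Real.exp_add, ← sq]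
  have E6 : exp (-2 * z₀) = (e^2)⁻¹ := by
    rw [show (-2:ℝ) * z₀ = -(z₀ + z₀) by ring, Real.exp_neg, Real.exp_add, ← sq]
  rw [E1, E2, E3, E4] at h1 h3
  rw [E3, E5, E6] at h2 h4
  have hinv : e * e⁻¹ = 1 := mul_inv_cancel₀ he0.ne'
  have hinv2 : e^2 * (e^2)⁻¹ = 1 := mul_inv_cancel₀ (pow_ne_zero 2 he0.ne')
  have H1 : 2*e^2 + C₁*e^4 + 2*C₂*e^3 + 2*C₃*e + C₄ = 0 := by
    linear_combination (2*e^2)*h1 - (2*C₃*e + C₄*(1+e*e⁻¹))*hinv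
  have H2 : 2*e^2 + C₁ + 2*C₂*e + 2*C₃*e^3 + C₄*e^4 = 0 := by
    linear_combination (2*e^2)*h2 - (2*C₂*e + C₁*(1+e*e⁻¹))*hinv
  have H3 : -C₁*e^4 - C₂*e^3 + C₃*e + C₄ = k*e^2 := by
    linear_combination (e^2)*h3 - (C₃*e + C₄*(1+e*e⁻¹))*hinv
  have H4 : -C₁ - C₂*e + C₃*e^3 + C₄*e^4 = -k*e^2 := by
    linear_combination (e^2)*h4 + (C₂*e + C₁*(1+e*e⁻¹))*hinv
  have hv : C₁ = C₄ := by
    have h0 : (C₁ - C₄) * (e^2-1)^3 = 0 := by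
      linear_combination (-(e^2+1))*H1 + (e^2+1)*H2 - 2*(e^2-1)*H3 - 2*(e^2-1)*H4
    rcases mul_eq_zero.mp h0 with h | h
    · linarith [sub_eq_zero.mp h]
    · exact absurd h (pow_ne_zero 3 hene)
  have hq : C₂ = C₃ := by
    have h0 : (C₂ - C₃) * (e*(e^2+1)) = 0 := by
      linear_combination -H3 - H4 - (e^4+1)*hv
    rcases mul_eq_zero.mp h0 with h | h
    · linarith [sub_eq_zero.mp h]
    · exact absurd h (by positivity)
  have hC1 : C₁ * ((e^2-1)*(e^4+4*e^2+1)) = 2*e^2*((e^2-1) - k*(e^2+1)) := by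
    linear_combination (-(e^2-1))*H1 - 2*(e^2+1)*H3 + (-(3*e^2+1))*hv + (-(4*e^3))*hq
  have hC2 : C₂ * (e*(e^2-1)*(e^4+4*e^2+1)) = e^2*(k*(e^4+1) - 2*(e^4-1)) := by
    linear_combination (-(e^4+4*e^2+1))*H3 + (-(e^2+1))*hC1
      + (-(e^4+4*e^2+1))*hv + (-(e*(e^4+4*e^2+1)))*hq
  have hA : C₁ = Aval z₀ k := by
    rw [Aval, ← he_def, eq_div_iff (mul_ne_zero hene hd)]
    linarith [hC1]
  have hB : C₂ = Bval z₀ k := by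
    rw [Bval, ← he_def, eq_div_iff (mul_ne_zero hene hd)]
    have h' : e * (C₂ * ((e^2-1)*(e^4+4*e^2+1))) =
        e * (e*(k*(e^4+1) - 2*(e^4-1))) := by linear_combination hC2
    exact mul_left_cancel₀ he0.ne' h'
  exact ⟨hA, hB, hq ▸ hB, hv ▸ hA⟩

lemma a_eq (z₀ k : ℝ) (hz₀ : 0 < z₀) :
    (Real.sinh z₀ - k * Real.cosh z₀) / ((2 + Real.cosh (2*z₀)) * Real.sinh z₀)
      = Aval z₀ k := by
  set e := exp z₀ with he_def
  have he0 : (0:ℝ) < e := exp_pos z₀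
  have he1 : (1:ℝ) < e := by rw [he_def]; simpa using Real.exp_lt_exp.mpr hz₀
  have hene : e^2 - 1 ≠ 0 := by nlinarith
  have hd : e^4+4*e^2+1 ≠ 0 := by positivity
  have hs : Real.sinh z₀ = (e^2-1)/(2*e) := by
    rw [Real.sinh_eq, Real.exp_neg, ← he_def]; field_simp
  have hc : Real.cosh z₀ = (e^2+1)/(2*e) := by
    rw [Real.cosh_eq, Real.exp_neg, ← he_def]; field_simp
  have hc2 : Real.cosh (2*z₀) = (e^4+1)/(2*e^2) := by
    rw [Real.cosh_eq, Real.exp_neg, two_mul, Real.exp_add, ← he_def]; field_simp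
  rw [hs, hc, hc2, Aval, ← he_def]
  rw [div_eq_div_iff]
  · field_simp
    ring
  · have : (0:ℝ) < (2 + (e^4+1)/(2*e^2)) := by positivity
    intro h
    rcases mul_eq_zero.mp h with h | h
    · exact absurd h this.ne'
    · rw [div_eq_zero_iff] at h
      rcases h with h | h
      · exact hene h
      · nlinarith
  · exact mul_ne_zero hene hd

lemma b_eq (z₀ k : ℝ) (hz₀ : 0 < z₀) :
    (k * Real.cosh (2*z₀) - 2 * Real.sinh (2*z₀))
      / (2 * (2 + Real.cosh (2*z₀)) * Real.sinh z₀) = Bval z₀ k := by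
  set e := exp z₀ with he_def
  have he0 : (0:ℝ) < e := exp_pos z₀
  have he1 : (1:ℝ) < e := by rw [he_def]; simpa using Real.exp_lt_exp.mpr hz₀
  have hene : e^2 - 1 ≠ 0 := by nlinarith
  have hd : e^4+4*e^2+1 ≠ 0 := by positivity
  have hs : Real.sinh z₀ = (e^2-1)/(2*e) := by
    rw [Real.sinh_eq, Real.exp_neg, ← he_def]; field_simp
  have hc2 : Real.cosh (2*z₀) = (e^4+1)/(2*e^2) := by
    rw [Real.cosh_eq, Real.exp_neg, two_mul, Real.exp_add, ← he_def]; field_simp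
  have hs2 : Real.sinh (2*z₀) = (e^4-1)/(2*e^2) := by
    rw [Real.sinh_eq, Real.exp_neg, two_mul, Real.exp_add, ← he_def]; field_simp
  rw [hs, hc2, hs2, Bval, ← he_def]
  rw [div_eq_div_iff]
  · field_simp
    ring
  · have h2 : (0:ℝ) < (2 + (e^4+1)/(2*e^2)) := by positivity
    intro h
    rcases mul_eq_zero.mp h with h | h
    · rcases mul_eq_zero.mp h with h | h
      · norm_num at h
      · exact absurd h h2.ne'
    · rw [div_eq_zero_iff] at h
      rcases h with h | h
      · exact hene h
      · nlinarith
  · exact mul_ne_zero hene hd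

lemma exists_part (z₀ k : ℝ) (hz₀ : 0 < z₀) :
    Fext (Aval z₀ k) (Bval z₀ k) (Bval z₀ k) (Aval z₀ k) (-z₀) = 0 ∧
    Fext (Aval z₀ k) (Bval z₀ k) (Bval z₀ k) (Aval z₀ k) z₀ = 0 ∧
    deriv (Fext (Aval z₀ k) (Bval z₀ k) (Bval z₀ k) (Aval z₀ k)) (-z₀) = k ∧
    deriv (Fext (Aval z₀ k) (Bval z₀ k) (Bval z₀ k) (Aval z₀ k)) z₀ = -k := by
  have he0 : (0:ℝ) < exp z₀ := exp_pos z₀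
  have he1 : (1:ℝ) < exp z₀ := by simpa using Real.exp_lt_exp.mpr hz₀
  set e := exp z₀ with he_def
  have hene : e^2 - 1 ≠ 0 := by nlinarith
  have hd : e^4+4*e^2+1 ≠ 0 := by positivity
  have E1 : exp (-2 * -z₀) = e^2 := by
    rw [show (-2:ℝ) * -z₀ = z₀ + z₀ by ring, Real.exp_add, ← sq]
  have E2 : exp (-(-z₀)) = e := by rw [neg_neg]
  have E3 : exp (-z₀) = e⁻¹ := Real.exp_neg z₀
  have E4 : exp (2 * -z₀) = (e^2)⁻¹ := by
    rw [show (2:ℝ) * -z₀ = -(z₀ + z₀) by ring, Real.exp_neg, Real.exp_add, ← sq]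
  have E5 : exp (2 * z₀) = e^2 := by rw [two_mul, Real.exp_add, ← sq]
  have E6 : exp (-2 * z₀) = (e^2)⁻¹ := by
    rw [show (-2:ℝ) * z₀ = -(z₀ + z₀) by ring, Real.exp_neg, Real.exp_add, ← sq]
  refine ⟨?_, ?_, ?_, ?_⟩
  · simp only [Fext, E1, E2, E3, E4, Aval, Bval, ← he_def]
    field_simp
    ring
  · simp only [Fext, E3, E5, E6, Aval, Bval, ← he_def]
    field_simp
    ring
  · rw [deriv_Fext]
    simp only [E1, E2, E3, E4, Aval, Bval, ← he_def]
    field_simp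
    ring
  · rw [deriv_Fext]
    simp only [E3, E5, E6, Aval, Bval, ← he_def]
    field_simp
    ring

/-- for every `z₀ > 0` and `k` there is a unique quadruple
`(C₁, C₂, C₃, C₄)` with `F(±z₀) = 0`, `F'(−z₀) = k`, `F'(z₀) = −k`; and for that
quadruple `F(z) = 1 + a·cosh 2z + 2b·cosh z` with the stated `a`, `b`. -/
theorem hirzebruch_bolting_conditions (z₀ k : ℝ) (hz₀ : 0 < z₀) :
    (∃! p : ℝ × ℝ × ℝ × ℝ,
      Fext p.1 p.2.1 p.2.2.1 p.2.2.2 (-z₀) = 0 ∧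
      Fext p.1 p.2.1 p.2.2.1 p.2.2.2 z₀ = 0 ∧
      deriv (Fext p.1 p.2.1 p.2.2.1 p.2.2.2) (-z₀) = k ∧
      deriv (Fext p.1 p.2.1 p.2.2.1 p.2.2.2) z₀ = -k) ∧
    (∀ C₁ C₂ C₃ C₄ : ℝ,
      (Fext C₁ C₂ C₃ C₄ (-z₀) = 0 ∧ Fext C₁ C₂ C₃ C₄ z₀ = 0 ∧
        deriv (Fext C₁ C₂ C₃ C₄) (-z₀) = k ∧ deriv (Fext C₁ C₂ C₃ C₄) z₀ = -k) →
      ∀ z : ℝ, Fext C₁ C₂ C₃ C₄ z =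
        1 + (Real.sinh z₀ - k * Real.cosh z₀) / ((2 + Real.cosh (2*z₀)) * Real.sinh z₀)
              * Real.cosh (2*z)
          + 2 * ((k * Real.cosh (2*z₀) - 2 * Real.sinh (2*z₀))
              / (2 * (2 + Real.cosh (2*z₀)) * Real.sinh z₀)) * Real.cosh z) := by

  obtain ⟨c1, c2, c3, c4⟩ := exists_part z₀ k hz₀
  constructor
  · refine ⟨(Aval z₀ k, Bval z₀ k, Bval z₀ k, Aval z₀ k), ⟨c1, c2, c3, c4⟩, ?_⟩
    rintro ⟨q1, q2, q3, q4⟩ ⟨hq1, hq2, hq3, hq4⟩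
    obtain ⟨e1, e2, e3, e4⟩ := key z₀ k q1 q2 q3 q4 hz₀ hq1 hq2 hq3 hq4
    simp only [Prod.mk.injEq]
    exact ⟨e1, e2, e3, e4⟩
  · rintro C₁ C₂ C₃ C₄ ⟨h1, h2, h3, h4⟩ z
    obtain ⟨e1, e2, e3, e4⟩ := key z₀ k C₁ C₂ C₃ C₄ hz₀ h1 h2 h3 h4
    rw [a_eq z₀ k hz₀, b_eq z₀ k hz₀, e1, e2, e3, e4]
    have E1 : Real.cosh (2*z) = (exp (2*z) + exp (-2*z))/2 := by
      rw [Real.cosh_eq]; norm_num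
    have E2 : Real.cosh z = (exp z + exp (-z))/2 := Real.cosh_eq z
    simp only [Fext, E1, E2]
    ring
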